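/- Every pyramid graph Π_h is a spreading graph: for every hiding-connected tight vertex set X in Π_h and every level j with 1 ≤ j ≤ maxlevel(hidden(X)), the spreading inequality |X| ≥ h_j(hidden(X)) + j − minlevel(X) holds. -/

import Mathlib

/-- A layered DAG: vertices are partitioned into levels `0, 1, ..., height`,
every edge goes from some level `L - 1` to level `L` (`pred v` is the finite
set of immediate predecessors of `v`), all sources are on level `0`, and there
is a unique sink, located on the top level. -/
structure LGraph (V : Type) where
  pred : V → Finset V
  height : ℕ
  lvl : V → ℕ
  lvl_le : ∀ v, lvl v ≤ height
  edge_lvl : ∀ u v, u ∈ pred v → lvl v = lvl u + 1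
  source_lvl : ∀ v, pred v = ∅ ↔ lvl v = 0
  sink : V
  sink_unique : ∀ v, (∀ w, v ∉ pred w) ↔ v = sink
  sink_lvl : lvl sink = height
/-- Vertices of the pyramid graph of height `h`: the vertex `(L, i)` is the
`i`-th vertex (from the left) on level `L`, where `L + i ≤ h`. -/
abbrev PyrV (h : ℕ) := {p : ℕ × ℕ // p.1 + p.2 ≤ h}

/-- The immediate predecessors of a vertex in the pyramid graph: the `i`-th
vertex on level `L ≥ 1` has incoming edges from the `i`-th and `(i+1)`-st
vertices on level `L - 1`; vertices on level `0` are sources. -/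
def pyrPred (h : ℕ) (v : PyrV h) : Finset (PyrV h) :=
  if hv : v.1.1 = 0 then ∅
  else
    {⟨(v.1.1 - 1, v.1.2), by have := v.2; show v.1.1 - 1 + v.1.2 ≤ h; omega⟩,
     ⟨(v.1.1 - 1, v.1.2 + 1), by have := v.2; show v.1.1 - 1 + (v.1.2 + 1) ≤ h; omega⟩}

/-- The unique sink of the pyramid graph of height `h`. -/
def pyrSink (h : ℕ) : PyrV h := ⟨(h, 0), by show h + 0 ≤ h; omega⟩
/-- The pyramid graph of height `h` as a layered DAG. -/
def pyramid (h : ℕ) : LGraph (PyrV h) where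
  pred := pyrPred h
  height := h
  lvl v := v.1.1
  lvl_le v := by have := v.2; show v.1.1 ≤ h; omega
  edge_lvl := by
    intro u v hu
    unfold pyrPred at hu
    split at hu
    · exact absurd hu (Finset.notMem_empty u)
    · rename_i hv
      rw [Finset.mem_insert, Finset.mem_singleton] at hu
      rcases hu with h1 | h1
      all_goals
        subst h1
        show v.1.1 = v.1.1 - 1 + 1
        omega
  source_lvl := by
    intro v
    show pyrPred h v = ∅ ↔ v.1.1 = 0
    unfold pyrPred
    split
    · rename_i h0
      exact iff_of_true rfl h0
    · rename_i h0
      exact iff_of_false (by simp) h0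
  sink := pyrSink h
  sink_unique := by
    intro v
    constructor
    · intro hv
      by_contra hne
      have hv2 := v.2
      rcases Nat.lt_or_ge (v.1.1 + v.1.2) h with hlt | hge
      · refine hv ⟨(v.1.1 + 1, v.1.2), by show v.1.1 + 1 + v.1.2 ≤ h; omega⟩ ?_
        unfold pyrPred
        split
        · rename_i h0
          exact absurd h0 (by simp)
        · refine Finset.mem_insert.mpr (Or.inl ?_)
          refine Subtype.ext (Prod.ext_iff.mpr ⟨?_, ?_⟩)
          · show v.1.1 = v.1.1 + 1 - 1
            omega
          · rfl
      · have hz : v.1.2 ≠ 0 := by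
          intro h0
          apply hne
          refine Subtype.ext (Prod.ext_iff.mpr ⟨?_, ?_⟩)
          · show v.1.1 = h
            omega
          · exact h0
        refine hv ⟨(v.1.1 + 1, v.1.2 - 1), by show v.1.1 + 1 + (v.1.2 - 1) ≤ h; omega⟩ ?_
        unfold pyrPred
        split
        · rename_i h0
          exact absurd h0 (by simp)
        · refine Finset.mem_insert.mpr (Or.inr (Finset.mem_singleton.mpr ?_))
          refine Subtype.ext (Prod.ext_iff.mpr ⟨?_, ?_⟩)
          · show v.1.1 = v.1.1 + 1 - 1
            omega
          · show v.1.2 = v.1.2 - 1 + 1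
            omega
    · intro hv w hw
      subst hv
      have hw2 := w.2
      unfold pyrPred at hw
      split at hw
      · exact absurd hw (Finset.notMem_empty _)
      · rename_i h0
        rw [Finset.mem_insert, Finset.mem_singleton] at hw
        rcases hw with h1 | h1
        all_goals
          have h2 := congrArg (fun x : PyrV h => x.1.1) h1
          simp only [pyrSink] at h2
          omega
  sink_lvl := rfl
/-- `l` is a path from a source to `w` (in a graph given by its immediate
predecessor function `pred`): consecutive vertices are joined by edges, the
first vertex is a source, and the last vertex is `w`. -/
def IsSourcePath {V : Type} (pred : V → Finset V) (l : List V) (w : V) : Prop :=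
  l.Chain' (fun a b => a ∈ pred b) ∧ (∃ s, l.head? = some s ∧ pred s = ∅) ∧
    l.getLast? = some w

/-- A vertex set `U` hides the vertex `w` if every path from a source to `w`
intersects `U`. -/
def Hides {V : Type} (pred : V → Finset V) (U : Set V) (w : V) : Prop :=
  ∀ l : List V, IsSourcePath pred l w → ∃ u ∈ U, u ∈ l

/-- `U` hides the vertex set `B` if it hides every vertex of `B`. -/
def HidesSet {V : Type} (pred : V → Finset V) (U B : Set V) : Prop :=
  ∀ w ∈ B, Hides pred U w

/-- `Reaches pred u v` : the vertex `v` is reachable from `u`. -/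
def Reaches {V : Type} (pred : V → Finset V) : V → V → Prop :=
  Relation.ReflTransGen fun a b => a ∈ pred b
/-- A vertex set `X` is tight if no `u ∈ X` is hidden by `X \ {u}`. -/
def Tight {V : Type} [DecidableEq V] (G : LGraph V) (X : Finset V) : Prop :=
  ∀ u ∈ X, ¬ Hides G.pred (↑(X.erase u)) u

/-- The set of all vertices hidden by `X`. -/
def hiddenSet {V : Type} (G : LGraph V) (X : Finset V) : Set V :=
  { w | Hides G.pred (↑X) w }

/-- `X⌈x⌉`: the set of `u ∈ X` such that some source path to `x` intersects
`X` exactly in `{u}`. -/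
def nhsSet {V : Type} [DecidableEq V] (G : LGraph V) (X : Finset V) (x : V) : Set V :=
  { u | u ∈ X ∧ ∃ l : List V, IsSourcePath G.pred l x ∧ u ∈ l ∧ ∀ y ∈ X, y ∈ l → y = u }

/-- The edge relation of the hiding set graph `H(G, X)`: vertices `x, y` (both
hidden by `X`) are adjacent when the set of vertices below `x` hidden by
`X⌈x⌉` intersects the set of vertices below `y` hidden by `X⌈y⌉`. -/
def HSAdj {V : Type} [DecidableEq V] (G : LGraph V) (X : Finset V) (x y : V) : Prop :=
  x ∈ hiddenSet G X ∧ y ∈ hiddenSet G X ∧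
    ∃ w, Reaches G.pred w x ∧ Hides G.pred (nhsSet G X x) w ∧
      Reaches G.pred w y ∧ Hides G.pred (nhsSet G X y) w

/-- `X` is hiding-connected if the hiding set graph `H(G, X)` is connected. -/
def HidingConnected {V : Type} [DecidableEq V] (G : LGraph V) (X : Finset V) : Prop :=
  ∀ x ∈ hiddenSet G X, ∀ y ∈ hiddenSet G X, Relation.ReflTransGen (HSAdj G X) x y

/-- `h_j(Y)`: the minimum size of a vertex set with all vertices on level `j`
or higher hiding every vertex of `Y` on level `j` or higher. -/
noncomputable def hLevel {V : Type} (G : LGraph V) (j : ℕ) (Y : Set V) : ℕ :=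
  sInf { n | ∃ Z : Finset V, (∀ z ∈ Z, j ≤ G.lvl z) ∧
      (∀ y ∈ Y, j ≤ G.lvl y → Hides G.pred (↑Z) y) ∧ Z.card = n }

/-- The lowest level of any vertex in `X`. -/
noncomputable def minLvl {V : Type} (G : LGraph V) (X : Finset V) : ℕ :=
  sInf (G.lvl '' (↑X : Set V))

/-- The highest level of any vertex hidden by `X`. -/
noncomputable def maxLvlHidden {V : Type} (G : LGraph V) (X : Finset V) : ℕ :=
  sSup (G.lvl '' hiddenSet G X)

/-- A layered DAG is a spreading graph if for every (nonempty) hiding-connected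
tight vertex set `X` and every level `j` with `1 ≤ j ≤ maxlevel(hidden(X))`,
the spreading inequality `|X| ≥ h_j(hidden(X)) + j − minlevel(X)` holds. -/
def Spreading {V : Type} [DecidableEq V] (G : LGraph V) : Prop :=
  ∀ X : Finset V, X.Nonempty → Tight G X → HidingConnected G X →
    ∀ j : ℕ, 1 ≤ j → j ≤ maxLvlHidden G X →
      hLevel G j (hiddenSet G X) + j ≤ X.card + minLvl G X

namespace PyrSpread

variable {V : Type}

/-! ### Generic path lemmas -/

lemma head?_append_left {l₁ l₂ : List V} {s : V} (hs : l₁.head? = some s) :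
    (l₁ ++ l₂).head? = some s := by
  cases l₁ with
  | nil => simp at hs
  | cons a t => simpa using hs

lemma sp_ne_nil {pred : V → Finset V} {l : List V} {w : V}
    (hl : IsSourcePath pred l w) : l ≠ [] := by
  rcases hl with ⟨_, ⟨s, hs, _⟩, _⟩
  intro h; subst h; simp at hs

lemma sp_last_mem {pred : V → Finset V} {l : List V} {w : V}
    (hl : IsSourcePath pred l w) : w ∈ l := by
  have hne := sp_ne_nil hl
  rcases hl with ⟨_, _, hlast⟩
  rw [List.getLast?_eq_getLast hne] at hlast
  have : l.getLast hne = w := by injection hlast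
  rw [← this]
  exact List.getLast_mem hne

lemma sp_concat {pred : V → Finset V} {l : List V} {v w : V}
    (hl : IsSourcePath pred l v) (hm : v ∈ pred w) :
    IsSourcePath pred (l ++ [w]) w := by
  obtain ⟨hc, ⟨s, hs, hsrc⟩, hlast⟩ := hl
  refine ⟨?_, ⟨s, head?_append_left hs, hsrc⟩, by simp⟩
  unfold List.Chain'
  rw [List.isChain_append]
  refine ⟨hc, List.isChain_singleton w, ?_⟩
  intro x hx y hy
  simp only [List.head?_cons, Option.mem_def, Option.some.injEq] at hy
  rw [hlast] at hx
  simp only [Option.mem_def, Option.some.injEq] at hx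
  subst hx; subst hy
  exact hm

lemma sp_peel {pred : V → Finset V} {l : List V} {w : V}
    (hl : IsSourcePath pred l w) :
    l = [w] ∨ ∃ l' s', l = l' ++ [w] ∧ s' ∈ pred w ∧ IsSourcePath pred l' s' := by
  obtain ⟨hc, ⟨s, hs, hsrc⟩, hlast⟩ := hl
  have hne : l ≠ [] := by intro h; subst h; simp at hs
  obtain ⟨l', a, hla⟩ := List.eq_nil_or_concat l |>.resolve_left hne
  rw [List.concat_eq_append] at hla
  subst hla
  have haw : a = w := by
    rw [List.getLast?_concat] at hlast
    injection hlast
  subst haw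
  cases l' with
  | nil => exact Or.inl rfl
  | cons b t =>
    right
    have hne' : b :: t ≠ [] := by simp
    unfold List.Chain' at hc
    rw [List.isChain_append] at hc
    obtain ⟨hc1, _, hlink⟩ := hc
    have hlast' : (b :: t).getLast? = some ((b :: t).getLast hne') :=
      List.getLast?_eq_getLast hne'
    have hmem : (b :: t).getLast hne' ∈ pred a := by
      apply hlink
      · rw [hlast']; rfl
      · rfl
    refine ⟨b :: t, (b :: t).getLast hne', rfl, hmem, hc1, ⟨s, ?_, hsrc⟩, hlast'⟩
    simpa using hs

lemma sp_peel' {pred : V → Finset V} {l : List V} {w : V}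
    (hl : IsSourcePath pred l w) (hw : pred w ≠ ∅) :
    ∃ l' s', l = l' ++ [w] ∧ s' ∈ pred w ∧ IsSourcePath pred l' s' := by
  rcases sp_peel hl with h1 | h2
  · exfalso
    obtain ⟨_, ⟨s, hs, hsrc⟩, _⟩ := hl
    rw [h1] at hs
    simp only [List.head?_cons, Option.some.injEq] at hs
    subst hs
    exact hw hsrc
  · exact h2

/-! ### Generic LGraph lemmas -/

lemma exists_good_path (G : LGraph V) :
    ∀ n (v : V), G.lvl v = n →
      ∃ l, IsSourcePath G.pred l v ∧
        ∀ u ∈ l, G.lvl u ≤ G.lvl v ∧ (u = v ∨ G.lvl u < G.lvl v) := by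
  intro n
  induction n with
  | zero =>
    intro v hv
    refine ⟨[v], ⟨List.isChain_singleton v, ⟨v, rfl, (G.source_lvl v).mpr hv⟩, rfl⟩, ?_⟩
    intro u hu
    simp only [List.mem_singleton] at hu
    subst hu
    exact ⟨le_refl _, Or.inl rfl⟩
  | succ n ih =>
    intro v hv
    have hsrc : G.pred v ≠ ∅ := by
      intro hemp
      have := (G.source_lvl v).mp hemp
      omega
    obtain ⟨s, hs⟩ := Finset.nonempty_iff_ne_empty.mpr hsrc
    have hls : G.lvl v = G.lvl s + 1 := G.edge_lvl s v hs
    obtain ⟨l, hl, hmem⟩ := ih s (by omega)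
    refine ⟨l ++ [v], sp_concat hl hs, ?_⟩
    intro u hu
    rcases List.mem_append.mp hu with hu | hu
    · have := hmem u hu
      refine ⟨by omega, Or.inr (by omega)⟩
    · simp only [List.mem_singleton] at hu
      subst hu
      exact ⟨le_refl _, Or.inl rfl⟩

lemma mem_hiddenSet_of_mem {G : LGraph V} {X : Finset V} {x : V} (hx : x ∈ X) :
    x ∈ hiddenSet G X :=
  fun l hl => ⟨x, by exact_mod_cast hx, sp_last_mem hl⟩

lemma hidden_mem_of_lvl_le {G : LGraph V} {X : Finset V} {pp : ℕ}
    (hX : ∀ x ∈ X, pp ≤ G.lvl x) {v : V} (hv : v ∈ hiddenSet G X)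
    (hlv : G.lvl v ≤ pp) : v ∈ X := by
  obtain ⟨l, hl, hmem⟩ := exists_good_path G (G.lvl v) v rfl
  obtain ⟨u, huX, hul⟩ := hv l hl
  have huX' : u ∈ X := huX
  have h1 := hX u huX'
  rcases (hmem u hul).2 with rfl | hlt
  · exact huX'
  · omega

lemma exists_clean_path {G : LGraph V} {S : Set V} {v : V}
    (hv : ¬ Hides G.pred S v) :
    ∃ l, IsSourcePath G.pred l v ∧ ∀ u ∈ S, u ∉ l := by
  simp only [Hides, not_forall] at hv
  obtain ⟨l, hl⟩ := hv
  push_neg at hl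
  exact ⟨l, hl.1, hl.2⟩

lemma hidden_parent {G : LGraph V} {X : Finset V} {v u : V}
    (hv : v ∈ hiddenSet G X) (hvX : v ∉ X) (hu : u ∈ G.pred v) :
    u ∈ hiddenSet G X := by
  by_contra hun
  obtain ⟨l, hl, hclean⟩ := exists_clean_path hun
  obtain ⟨x, hxX, hxl⟩ := hv (l ++ [v]) (sp_concat hl hu)
  rcases List.mem_append.mp hxl with hxl | hxl
  · exact hclean x hxX hxl
  · simp only [List.mem_singleton] at hxl
    subst hxl
    exact hvX hxX

lemma lvl_le_of_reaches {G : LGraph V} {w u : V} (hr : Reaches G.pred w u) :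
    G.lvl w ≤ G.lvl u := by
  induction hr with
  | refl => exact le_refl _
  | tail hab hbc ih =>
    have := G.edge_lvl _ _ hbc
    omega

lemma exists_blocker_low {G : LGraph V} {S : Set V} {w : V}
    (hw : Hides G.pred S w) :
    ∃ u ∈ S, G.lvl u ≤ G.lvl w := by
  obtain ⟨l, hl, hmem⟩ := exists_good_path G (G.lvl w) w rfl
  obtain ⟨u, hu, hul⟩ := hw l hl
  exact ⟨u, hu, (hmem u hul).1⟩

lemma hidden_at_level {G : LGraph V} {X : Finset V} {u' : V} {ℓ : ℕ} :
    ∀ n (wv : V) (P : List V), IsSourcePath G.pred P wv → wv ∈ hiddenSet G X →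
      (∀ y ∈ X, y ∈ P → y = u') → G.lvl u' < ℓ → G.lvl wv = ℓ + n →
      ∃ s, s ∈ hiddenSet G X ∧ G.lvl s = ℓ := by
  intro n
  induction n with
  | zero =>
    intro wv P _ hv _ _ hl
    exact ⟨wv, hv, by omega⟩
  | succ n ih =>
    intro wv P hP hv hU hu hl
    have hwX : wv ∉ X := by
      intro hX
      have := hU wv hX (sp_last_mem hP)
      subst this
      omega
    have hpne : G.pred wv ≠ ∅ := by
      intro he
      have := (G.source_lvl wv).mp he
      omega
    obtain ⟨l', s', rfl, hs', hl'⟩ := sp_peel' hP hpne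
    have hs'h : s' ∈ hiddenSet G X := hidden_parent hv hwX hs'
    have hlv : G.lvl wv = G.lvl s' + 1 := G.edge_lvl s' wv hs'
    exact ih s' l' hl' hs'h (fun y hy hyl => hU y hy (List.mem_append_left _ hyl)) hu
      (by omega)

lemma split_path {G : LGraph V} {j : ℕ} :
    ∀ n (w : V) (l : List V), IsSourcePath G.pred l w → G.lvl w = j + n →
      ∃ t Pa Pb, l = Pa ++ Pb ∧ IsSourcePath G.pred Pa t ∧ G.lvl t = j ∧
        (∀ u ∈ Pb, j < G.lvl u) ∧
        ∀ l₀, IsSourcePath G.pred l₀ t → IsSourcePath G.pred (l₀ ++ Pb) w := by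
  intro n
  induction n with
  | zero =>
    intro w l hl hw
    exact ⟨w, l, [], by simp, hl, by omega, by simp, fun l₀ h₀ => by simpa using h₀⟩
  | succ n ih =>
    intro w l hl hw
    have hpne : G.pred w ≠ ∅ := by
      intro he
      have := (G.source_lvl w).mp he
      omega
    obtain ⟨l', s', rfl, hs', hl'⟩ := sp_peel' hl hpne
    have hlv : G.lvl w = G.lvl s' + 1 := G.edge_lvl s' w hs'
    obtain ⟨t, Pa, Pb, rfl, hPa, ht, hPb, hsp⟩ := ih s' l' hl' (by omega)
    refine ⟨t, Pa, Pb ++ [w], by simp, hPa, ht, ?_, ?_⟩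
    · intro u hu
      rcases List.mem_append.mp hu with hu | hu
      · exact hPb u hu
      · simp only [List.mem_singleton] at hu
        subst hu
        omega
    · intro l₀ h₀
      have := sp_concat (hsp l₀ h₀) hs'
      simpa [List.append_assoc] using this

/-! ### Hiding-graph connectivity: no level gaps -/

lemma exists_crossing {G : LGraph V} [DecidableEq V] {X : Finset V} {ℓ : ℕ}
    (gap : ∀ z ∈ hiddenSet G X, G.lvl z ≠ ℓ) {a b : V}
    (hab : Relation.ReflTransGen (HSAdj G X) a b) (hb : ℓ < G.lvl b) :
    G.lvl a < ℓ →
    ∃ u v, HSAdj G X u v ∧ G.lvl u < ℓ ∧ ℓ < G.lvl v := by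
  induction hab using Relation.ReflTransGen.head_induction_on with
  | refl =>
    intro ha
    exact absurd hb (by omega)
  | @head a' c hac hcb ih =>
    intro ha
    have hc : c ∈ hiddenSet G X := hac.2.1
    have hcl : G.lvl c ≠ ℓ := gap c hc
    rcases lt_or_gt_of_ne hcl with h1 | h1
    · exact ih h1
    · exact ⟨a', c, hac, ha, h1⟩

lemma no_gap {G : LGraph V} [DecidableEq V] {X : Finset V}
    (hConn : HidingConnected G X) {x0 yM : V}
    (hx0 : x0 ∈ hiddenSet G X) (hyM : yM ∈ hiddenSet G X) {ℓ : ℕ}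
    (h1 : G.lvl x0 < ℓ) (h2 : ℓ < G.lvl yM) :
    ∃ s ∈ hiddenSet G X, G.lvl s = ℓ := by
  by_contra hgap
  push_neg at hgap
  obtain ⟨u, v, huv, hu, hv⟩ := exists_crossing hgap (hConn x0 hx0 yM hyM) h2 h1
  obtain ⟨hidu, hidv, w, rwu, hwu, rwv, hwv⟩ := huv
  have hlw : G.lvl w ≤ G.lvl u := lvl_le_of_reaches rwu
  obtain ⟨u', hu'n, hu'l⟩ := exists_blocker_low hwv
  obtain ⟨hu'X, P, hP, _, hPuniq⟩ := hu'n
  obtain ⟨s, hs, hsl⟩ := hidden_at_level (u' := u') (ℓ := ℓ) (G.lvl v - ℓ) v P hP hidv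
    hPuniq (by omega) (by omega)
  exact (hgap s hs) hsl

/-! ### Pyramid-specific lemmas -/

@[simp] lemma pyramid_lvl (h : ℕ) (v : PyrV h) : (pyramid h).lvl v = v.1.1 := rfl

@[simp] lemma pyramid_pred (h : ℕ) : (pyramid h).pred = pyrPred h := rfl

noncomputable instance (h : ℕ) : Fintype (PyrV h) :=
  Fintype.ofInjective
    (fun v : PyrV h =>
      ((⟨v.1.1, by have := v.2; omega⟩ : Fin (h+1)),
       (⟨v.1.2, by have := v.2; omega⟩ : Fin (h+1))))
    (by
      intro a b hab
      simp only [Prod.mk.injEq, Fin.mk.injEq] at hab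
      exact Subtype.ext (Prod.ext_iff.mpr ⟨hab.1, hab.2⟩))

lemma left_parent_mem {h : ℕ} {v : PyrV h} (hv : 1 ≤ v.1.1) :
    (⟨(v.1.1 - 1, v.1.2), by have := v.2; omega⟩ : PyrV h) ∈ pyrPred h v := by
  unfold pyrPred
  rw [dif_neg (by omega : ¬ v.1.1 = 0)]
  exact Finset.mem_insert_self _ _

lemma right_parent_mem {h : ℕ} {v : PyrV h} (hv : 1 ≤ v.1.1) :
    (⟨(v.1.1 - 1, v.1.2 + 1), by have := v.2; omega⟩ : PyrV h) ∈ pyrPred h v := by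
  unfold pyrPred
  rw [dif_neg (by omega : ¬ v.1.1 = 0)]
  exact Finset.mem_insert_of_mem (Finset.mem_singleton_self _)

end PyrSpread
open PyrSpread

/-- Every pyramid graph `Π_h` is a spreading graph: for
every hiding-connected tight vertex set `X` in `Π_h` and every level `j` with
`1 ≤ j ≤ maxlevel(hidden(X))`, the spreading inequality
`|X| ≥ h_j(hidden(X)) + j − minlevel(X)` holds. -/
theorem pyramid_is_spreading (h : ℕ) (hh : 1 ≤ h) :
    Spreading (pyramid h) := by
  classical
  intro X hXne hT hConn j hj1 hjM
  set p := minLvl (pyramid h) X with hpdef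
  have hpmem : p ∈ (pyramid h).lvl '' (↑X : Set (PyrV h)) := by
    apply Nat.sInf_mem
    obtain ⟨x, hx⟩ := hXne
    exact ⟨(pyramid h).lvl x, ⟨x, hx, rfl⟩⟩
  obtain ⟨x0, hx0X, hx0p⟩ := hpmem
  have hx0X' : x0 ∈ X := hx0X
  have hpX : ∀ x ∈ X, p ≤ (pyramid h).lvl x := fun x hx => Nat.sInf_le ⟨x, hx, rfl⟩
  have hx0hid : x0 ∈ hiddenSet (pyramid h) X := mem_hiddenSet_of_mem hx0X'
  have hMmem : maxLvlHidden (pyramid h) X ∈ (pyramid h).lvl '' hiddenSet (pyramid h) X := by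
    apply Nat.sSup_mem
    · exact ⟨(pyramid h).lvl x0, ⟨x0, hx0hid, rfl⟩⟩
    · exact ⟨h, by rintro m ⟨v, _, rfl⟩; exact (pyramid h).lvl_le v⟩
  obtain ⟨yM, hyMhid, hyMl⟩ := hMmem
  have hjyM : j ≤ (pyramid h).lvl yM := by omega
  rcases le_or_gt j p with hjp | hpj
  · -- easy case : j ≤ minLvl X, take Z := X
    have h1 : hLevel (pyramid h) j (hiddenSet (pyramid h) X) ≤ X.card := by
      apply Nat.sInf_le
      exact ⟨X, fun z hz => le_trans hjp (hpX z hz), fun y hy _ => hy, rfl⟩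
    omega
  · -- hard case : p < j
    set Hv : ℕ → Finset (PyrV h) := fun ℓ =>
      Finset.univ.filter
        (fun v => (pyramid h).lvl v = ℓ ∧ v ∈ hiddenSet (pyramid h) X) with hHv
    have hHvmem : ∀ (ℓ : ℕ) (v : PyrV h), v ∈ Hv ℓ ↔
        ((pyramid h).lvl v = ℓ ∧ v ∈ hiddenSet (pyramid h) X) := by
      intro ℓ v
      exact Finset.mem_filter.trans (and_iff_right (Finset.mem_univ v))
    have ha : Hv p = X.filter (fun x => (pyramid h).lvl x = p) := by
      ext v
      rw [hHvmem, Finset.mem_filter]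
      constructor
      · rintro ⟨hlv, hhid⟩
        exact ⟨hidden_mem_of_lvl_le hpX hhid (le_of_eq hlv), hlv⟩
      · rintro ⟨hvX, hlv⟩
        exact ⟨hlv, mem_hiddenSet_of_mem hvX⟩
    have hne : ∀ m, p ≤ m → m < j → (Hv m).Nonempty := by
      intro m hpm hmj
      rcases eq_or_lt_of_le hpm with heq | hlt
      · exact ⟨x0, (hHvmem _ _).mpr ⟨by omega, hx0hid⟩⟩
      · obtain ⟨s, hs, hsl⟩ := no_gap hConn hx0hid hyMhid
          (show (pyramid h).lvl x0 < m by omega)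
          (show m < (pyramid h).lvl yM by omega)
        exact ⟨s, (hHvmem _ _).mpr ⟨hsl, hs⟩⟩
    have hstep : ∀ m, (Hv m).Nonempty →
        (Hv (m+1)).card ≤ (X.filter (fun x => (pyramid h).lvl x = m+1)).card
          + ((Hv m).card - 1) := by
      intro m hmne
      obtain ⟨vmax, hvmaxmem, hvmax⟩ :=
        Finset.exists_max_image (Hv m) (fun v => v.1.2) hmne
      have hBsub : ∀ v ∈ (Hv (m+1)).filter (fun v => v ∉ X),
          (if h1 : 1 ≤ v.1.1 then
            (⟨(v.1.1 - 1, v.1.2), by have := v.2; omega⟩ : PyrV h) else v)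
            ∈ (Hv m).erase vmax := by
        intro v hvB
        rw [Finset.mem_filter] at hvB
        obtain ⟨hvH, hvX⟩ := hvB
        obtain ⟨hlv, hhid⟩ := (hHvmem _ _).mp hvH
        have hlv' : v.1.1 = m + 1 := hlv
        have h1 : 1 ≤ v.1.1 := by omega
        rw [dif_pos h1]
        have hLhid := hidden_parent hhid hvX (left_parent_mem h1)
        have hRhid := hidden_parent hhid hvX (right_parent_mem h1)
        rw [Finset.mem_erase]
        constructor
        · intro heq
          have hR : (⟨(v.1.1 - 1, v.1.2 + 1), by have := v.2; omega⟩ : PyrV h) ∈ Hv m :=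
            (hHvmem _ _).mpr ⟨show v.1.1 - 1 = m by omega, hRhid⟩
          have h3 : v.1.2 + 1 ≤ vmax.1.2 := hvmax _ hR
          have h4 : v.1.2 = vmax.1.2 := by
            have := congrArg (fun x : PyrV h => x.1.2) heq
            simpa using this
          omega
        · exact (hHvmem _ _).mpr ⟨show v.1.1 - 1 = m by omega, hLhid⟩
      have hBinj : Set.InjOn (fun v : PyrV h => if h1 : 1 ≤ v.1.1 then
            (⟨(v.1.1 - 1, v.1.2), by have := v.2; omega⟩ : PyrV h) else v)
          ↑((Hv (m+1)).filter (fun v => v ∉ X)) := by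
        intro v hvB v' hv'B heq
        rw [Finset.mem_coe, Finset.mem_filter] at hvB hv'B
        have hl1 : v.1.1 = m + 1 := ((hHvmem _ _).mp hvB.1).1
        have hl2 : v'.1.1 = m + 1 := ((hHvmem _ _).mp hv'B.1).1
        simp only [] at heq
        rw [dif_pos (show (1:ℕ) ≤ v.1.1 by omega),
          dif_pos (show (1:ℕ) ≤ v'.1.1 by omega)] at heq
        have hval := congrArg Subtype.val heq
        have h5 : v.1.2 = v'.1.2 := by
          have := congrArg Prod.snd hval
          simpa using this
        exact Subtype.ext (Prod.ext_iff.mpr ⟨by omega, h5⟩)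
      have hBcard : ((Hv (m+1)).filter (fun v => v ∉ X)).card ≤ (Hv m).card - 1 := by
        have hc := Finset.card_le_card_of_injOn _ hBsub hBinj
        rwa [Finset.card_erase_of_mem hvmaxmem] at hc
      have hsub : Hv (m+1) ⊆ (Hv (m+1)).filter (fun v => v ∈ X)
          ∪ (Hv (m+1)).filter (fun v => v ∉ X) := by
        intro v hv
        by_cases hvX : v ∈ X
        · exact Finset.mem_union_left _ (Finset.mem_filter.mpr ⟨hv, hvX⟩)
        · exact Finset.mem_union_right _ (Finset.mem_filter.mpr ⟨hv, hvX⟩)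
      have hcard1 : (Hv (m+1)).card ≤ ((Hv (m+1)).filter (fun v => v ∈ X)).card
          + ((Hv (m+1)).filter (fun v => v ∉ X)).card :=
        le_trans (Finset.card_le_card hsub) (Finset.card_union_le _ _)
      have hsubX : (Hv (m+1)).filter (fun v => v ∈ X) ⊆
          X.filter (fun x => (pyramid h).lvl x = m+1) := by
        intro v hv
        rw [Finset.mem_filter] at hv ⊢
        exact ⟨hv.2, ((hHvmem _ _).mp hv.1).1⟩
      have hcard2 := Finset.card_le_card hsubX
      omega
    have htel : ∀ m, p ≤ m → m ≤ j →
        (Hv m).card + (m - p) ≤ (X.filter (fun x => (pyramid h).lvl x ≤ m)).card := by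
      intro m hpm
      induction m, hpm using Nat.le_induction with
      | base =>
        intro _
        have hfe : X.filter (fun x => (pyramid h).lvl x ≤ p)
            = X.filter (fun x => (pyramid h).lvl x = p) := by
          ext x
          rw [Finset.mem_filter, Finset.mem_filter]
          constructor
          · rintro ⟨hx, h'⟩
            exact ⟨hx, le_antisymm h' (hpX x hx)⟩
          · rintro ⟨hx, h'⟩
            exact ⟨hx, le_of_eq h'⟩
        rw [hfe, ← ha]
        omega
      | succ m hpm ih =>
        intro hmj
        have h1 := hstep m (hne m hpm (by omega))
        have h2 := ih (by omega)
        have h3 : 1 ≤ (Hv m).card := Finset.card_pos.mpr (hne m hpm (by omega))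
        have hdisj : Disjoint (X.filter (fun x => (pyramid h).lvl x ≤ m))
            (X.filter (fun x => (pyramid h).lvl x = m + 1)) := by
          rw [Finset.disjoint_left]
          intro x hx1 hx2
          rw [Finset.mem_filter] at hx1 hx2
          omega
        have hu : X.filter (fun x => (pyramid h).lvl x ≤ m) ∪
            X.filter (fun x => (pyramid h).lvl x = m + 1)
            = X.filter (fun x => (pyramid h).lvl x ≤ m + 1) := by
          ext x
          rw [Finset.mem_union, Finset.mem_filter, Finset.mem_filter, Finset.mem_filter]
          constructor
          · rintro (⟨hx, h'⟩ | ⟨hx, h'⟩) <;> exact ⟨hx, by omega⟩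
          · rintro ⟨hx, h'⟩
            rcases Nat.lt_or_ge ((pyramid h).lvl x) (m+1) with hlt | hge
            · exact Or.inl ⟨hx, by omega⟩
            · exact Or.inr ⟨hx, by omega⟩
        have h4 : (X.filter (fun x => (pyramid h).lvl x ≤ m + 1)).card =
            (X.filter (fun x => (pyramid h).lvl x ≤ m)).card
              + (X.filter (fun x => (pyramid h).lvl x = m + 1)).card := by
          rw [← hu, Finset.card_union_of_disjoint hdisj]
        omega
    have hxjsub : X.filter (fun x => (pyramid h).lvl x = j) ⊆ Hv j := by
      intro x hx
      rw [Finset.mem_filter] at hx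
      exact (hHvmem _ _).mpr ⟨hx.2, mem_hiddenSet_of_mem hx.1⟩
    set XGE := X.filter (fun x => j ≤ (pyramid h).lvl x) with hXGEdef
    set Zf := XGE ∪ Hv j with hZfdef
    have hZlvl : ∀ z ∈ Zf, j ≤ (pyramid h).lvl z := by
      intro z hz
      rcases Finset.mem_union.mp hz with hz | hz
      · exact (Finset.mem_filter.mp hz).2
      · have := ((hHvmem _ _).mp hz).1
        omega
    have hZhides : ∀ y ∈ hiddenSet (pyramid h) X, j ≤ (pyramid h).lvl y →
        Hides (pyramid h).pred (↑Zf) y := by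
      intro y hy hjy l hl
      obtain ⟨t, Pa, Pb, rfl, hPa, htl, hPb, hsp⟩ :=
        split_path (j := j) ((pyramid h).lvl y - j) y l hl (by omega)
      by_cases hth : t ∈ hiddenSet (pyramid h) X
      · refine ⟨t, ?_, List.mem_append_left _ (sp_last_mem hPa)⟩
        exact Finset.mem_coe.mpr
          (Finset.mem_union_right _ ((hHvmem _ _).mpr ⟨htl, hth⟩))
      · obtain ⟨P0, hP0, hcl⟩ := exists_clean_path hth
        obtain ⟨u, huX, hu⟩ := hy (P0 ++ Pb) (hsp P0 hP0)
        have huX' : u ∈ X := huX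
        have huPb : u ∈ Pb := by
          rcases List.mem_append.mp hu with h' | h'
          · exact absurd h' (hcl u huX)
          · exact h'
        refine ⟨u, ?_, List.mem_append_right _ huPb⟩
        exact Finset.mem_coe.mpr (Finset.mem_union_left _
          (Finset.mem_filter.mpr ⟨huX', le_of_lt (hPb u huPb)⟩))
    have hZcard : Zf.card + (j - p) ≤ X.card := by
      have e1 : Zf.card ≤ XGE.card + (Hv j \ XGE).card := by
        rw [hZfdef, ← Finset.union_sdiff_self_eq_union]
        exact le_of_eq (Finset.card_union_of_disjoint Finset.disjoint_sdiff)
      have e2 : Hv j \ XGE = Hv j \ X.filter (fun x => (pyramid h).lvl x = j) := by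
        ext v
        rw [Finset.mem_sdiff, Finset.mem_sdiff]
        constructor
        · rintro ⟨hv1, hv2⟩
          refine ⟨hv1, fun hvf => ?_⟩
          rw [Finset.mem_filter] at hvf
          exact hv2 (by rw [hXGEdef, Finset.mem_filter]; exact ⟨hvf.1, le_of_eq hvf.2.symm⟩)
        · rintro ⟨hv1, hv2⟩
          refine ⟨hv1, fun hvXGE => ?_⟩
          rw [hXGEdef, Finset.mem_filter] at hvXGE
          have hlvv := ((hHvmem _ _).mp hv1).1
          exact hv2 (Finset.mem_filter.mpr ⟨hvXGE.1, by omega⟩)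
      have e3 : (Hv j \ XGE).card = (Hv j).card
          - (X.filter (fun x => (pyramid h).lvl x = j)).card := by
        rw [e2, Finset.card_sdiff_of_subset hxjsub]
      have e4 := htel j (le_of_lt hpj) (le_refl j)
      have hdisj : Disjoint (X.filter (fun x => ¬ j ≤ (pyramid h).lvl x)) XGE := by
        rw [Finset.disjoint_left]
        intro x hx1 hx2
        rw [Finset.mem_filter] at hx1
        rw [hXGEdef, Finset.mem_filter] at hx2
        exact hx1.2 hx2.2
      have hXu : X.filter (fun x => ¬ j ≤ (pyramid h).lvl x) ∪ XGE = X := by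
        ext x
        rw [Finset.mem_union, Finset.mem_filter, hXGEdef, Finset.mem_filter]
        constructor
        · rintro (⟨hx, _⟩ | ⟨hx, _⟩) <;> exact hx
        · intro hx
          by_cases hc : j ≤ (pyramid h).lvl x
          · exact Or.inr ⟨hx, hc⟩
          · exact Or.inl ⟨hx, hc⟩
      have e5 : (X.filter (fun x => ¬ j ≤ (pyramid h).lvl x)).card + XGE.card
          = X.card := by
        rw [← Finset.card_union_of_disjoint hdisj, hXu]
      have hdisj2 : Disjoint (X.filter (fun x => ¬ j ≤ (pyramid h).lvl x))
          (X.filter (fun x => (pyramid h).lvl x = j)) := by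
        rw [Finset.disjoint_left]
        intro x hx1 hx2
        rw [Finset.mem_filter] at hx1 hx2
        omega
      have hXu2 : X.filter (fun x => ¬ j ≤ (pyramid h).lvl x) ∪
          X.filter (fun x => (pyramid h).lvl x = j)
          = X.filter (fun x => (pyramid h).lvl x ≤ j) := by
        ext x
        rw [Finset.mem_union, Finset.mem_filter, Finset.mem_filter, Finset.mem_filter]
        constructor
        · rintro (⟨hx, h'⟩ | ⟨hx, h'⟩) <;> exact ⟨hx, by omega⟩
        · rintro ⟨hx, h'⟩
          by_cases hc : (pyramid h).lvl x = j
          · exact Or.inr ⟨hx, hc⟩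
          · exact Or.inl ⟨hx, by omega⟩
      have e6 : (X.filter (fun x => ¬ j ≤ (pyramid h).lvl x)).card +
          (X.filter (fun x => (pyramid h).lvl x = j)).card
          = (X.filter (fun x => (pyramid h).lvl x ≤ j)).card := by
        rw [← Finset.card_union_of_disjoint hdisj2, hXu2]
      have e7 : (X.filter (fun x => (pyramid h).lvl x = j)).card ≤ (Hv j).card :=
        Finset.card_le_card hxjsub
      omega
    have hfin : hLevel (pyramid h) j (hiddenSet (pyramid h) X) ≤ Zf.card := by
      apply Nat.sInf_le
      exact ⟨Zf, hZlvl, hZhides, rfl⟩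
    omega
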